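/- Let ℓ ≥ 1, k ≥ 0, c > 0 and real numbers x_1,...,x_ℓ, ξ_1,...,ξ_k satisfy: x_i < c for all i; x_i + x_j ≥ c for all i ≠ j; x_i + ξ_j ≥ c for all i, j; and ξ_1 + ⋯ + ξ_k < c. Then 𝔏_c(x_1,...,x_ℓ,ξ_1,...,ξ_k) = (-1)^(ℓ+k+1) (ℓ-1)! ℓ^k. -/

import Mathlib

open scoped Classical

/-- The truncated Linnik function `𝔏_c(x)`: the sum over `j ≥ 1` of `(-1)^(j+1)/j` times
the number of decompositions of `x` into an ordered `j`-tuple of nonempty disjoint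
subvectors (equivalently, surjections of the index set onto `Fin j`) such that the sum of
components of each block is `< c`. -/
noncomputable def LinnikOn (c : ℝ) {ι : Type*} [Fintype ι] (x : ι → ℝ) : ℝ :=
  ∑ j ∈ Finset.Icc 1 (Fintype.card ι),
    ((-1 : ℝ) ^ (j + 1) / (j : ℝ)) *
      (Nat.card {π : ι → Fin j // Function.Surjective π ∧
        ∀ i : Fin j, (∑ a ∈ Finset.univ.filter (fun a => π a = i), x a) < c} : ℝ)


noncomputable def surjCount (k m : ℕ) : ℕ :=
  Nat.card {f : Fin k → Fin m // Function.Surjective f}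

lemma surjCount_eq_zero {k m : ℕ} (h : k < m) : surjCount k m = 0 := by
  have : IsEmpty {f : Fin k → Fin m // Function.Surjective f} := by
    constructor
    rintro ⟨f, hf⟩
    have := Fintype.card_le_of_surjective f hf
    simp at this
    omega
  simp [surjCount, Nat.card_of_isEmpty]

lemma surjCount_congr {α β : Type*} [Fintype α] [Fintype β] :
    Nat.card {f : α → β // Function.Surjective f} =
      surjCount (Fintype.card α) (Fintype.card β) := by
  apply Nat.card_congr
  refine (Equiv.arrowCongr (Fintype.equivFin α) (Fintype.equivFin β)).subtypeEquiv ?_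
  intro f
  constructor
  · intro hf
    exact ((Fintype.equivFin β).surjective.comp hf).comp (Fintype.equivFin α).symm.surjective
  · intro hf y
    obtain ⟨a, ha⟩ := hf ((Fintype.equivFin β) y)
    exact ⟨(Fintype.equivFin α).symm a, by simpa using congrArg (Fintype.equivFin β).symm ha⟩




lemma fiber_card (k n : ℕ) (T : Finset (Fin n)) :
    (Finset.univ.filter (fun f : Fin k → Fin n => Finset.image f Finset.univ = T)).card
      = surjCount k T.card := by
  rw [← Fintype.card_subtype]
  rw [← Nat.card_eq_fintype_card]
  have e : {f : Fin k → Fin n // Finset.image f Finset.univ = T} ≃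
      {g : Fin k → {y : Fin n // y ∈ T} // Function.Surjective g} := by
    refine ⟨fun f => ⟨fun i => ⟨f.1 i, ?_⟩, ?_⟩, fun g => ⟨fun i => (g.1 i).1, ?_⟩, ?_, ?_⟩
    · obtain ⟨f, hf⟩ := f; subst hf; exact Finset.mem_image_of_mem _ (Finset.mem_univ i)
    · rintro ⟨y, hy⟩
      rw [← f.2] at hy
      obtain ⟨i, _, hi⟩ := Finset.mem_image.mp hy
      exact ⟨i, by simp [hi]⟩
    · ext y
      simp only [Finset.mem_image, Finset.mem_univ, true_and]
      constructor
      · rintro ⟨i, rfl⟩; exact (g.1 i).2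
      · intro hy; obtain ⟨i, hi⟩ := g.2 ⟨y, hy⟩; exact ⟨i, congrArg Subtype.val hi⟩
    · intro f; ext i; rfl
    · intro g; ext i; rfl
  rw [Nat.card_congr e, surjCount_congr]
  simp

lemma identityA (k n : ℕ) :
    ∑ m ∈ Finset.range (k + 1), surjCount k m * n.choose m = n ^ k := by
  have h1 : (n : ℕ) ^ k = Fintype.card (Fin k → Fin n) := by simp
  rw [h1]
  have h2 : Fintype.card (Fin k → Fin n)
      = ∑ T ∈ (Finset.univ : Finset (Finset (Fin n))),
          (Finset.univ.filter (fun f : Fin k → Fin n => Finset.image f Finset.univ = T)).card := by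
    rw [← Finset.card_univ]
    exact Finset.card_eq_sum_card_fiberwise (fun f _ => Finset.mem_univ _)
  rw [h2]
  have h3 : ∀ T : Finset (Fin n),
      (Finset.univ.filter (fun f : Fin k → Fin n => Finset.image f Finset.univ = T)).card
        = surjCount k T.card := fiber_card k n
  simp_rw [h3]
  -- sum over all T grouped by card
  have h4 : (Finset.univ : Finset (Finset (Fin n))) = (Finset.univ : Finset (Fin n)).powerset :=
    (Finset.powerset_univ).symm
  rw [h4, Finset.powerset_card_disjiUnion, Finset.sum_disjiUnion (h := (Finset.pairwise_disjoint_powersetCard _).set_pairwise _)]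
  have h5 : ∀ m ∈ Finset.range ((Finset.univ : Finset (Fin n)).card + 1),
      ∑ T ∈ Finset.powersetCard m (Finset.univ : Finset (Fin n)), surjCount k T.card
        = n.choose m * surjCount k m := by
    intro m _
    have hc : ∀ T ∈ Finset.powersetCard m (Finset.univ : Finset (Fin n)), surjCount k T.card = surjCount k m :=
      fun T hT => by rw [(Finset.mem_powersetCard.mp hT).2]
    rw [Finset.sum_congr rfl hc, Finset.sum_const, Finset.card_powersetCard]
    simp [mul_comm]
  rw [Finset.sum_congr rfl h5]
  -- now both sums over different ranges; compare with common range
  have key : ∀ N : ℕ, k ≤ N → n ≤ N →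
      ∑ m ∈ Finset.range (N + 1), surjCount k m * n.choose m
        = ∑ m ∈ Finset.range (n + 1), n.choose m * surjCount k m := by
    intro N hk hn
    rw [Finset.sum_subset (Finset.range_subset_range.mpr (by omega) :
        Finset.range (n+1) ⊆ Finset.range (N+1)) ?_]
    · exact Finset.sum_congr rfl fun m _ => mul_comm _ _
    · intro m _ hm
      have : n < m := by simp at hm ⊢; omega
      rw [Nat.choose_eq_zero_of_lt this, zero_mul]
  have key2 := key (k + n) (by omega) (by omega)
  rw [Finset.card_univ, Fintype.card_fin, ← key2]
  rw [Finset.sum_subset (Finset.range_subset_range.mpr (by omega) :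
      Finset.range (k+1) ⊆ Finset.range (k+n+1)) ?_]
  intro m _ hm
  have : k < m := by simp at hm ⊢; omega
  rw [surjCount_eq_zero this, zero_mul]



lemma descPoch_eval_neg (L : ℕ) : ∀ m : ℕ,
    (descPochhammer ℝ m).eval (-(L + 1 : ℝ)) = (-1 : ℝ) ^ m * ((L + m).descFactorial m : ℝ)
  | 0 => by simp
  | (m + 1) => by
    rw [descPochhammer_succ_eval, descPoch_eval_neg L m]
    have h : (L + (m + 1)).descFactorial (m + 1) = (L + m + 1) * (L + m).descFactorial m :=
      Nat.succ_descFactorial_succ (L + m) m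
    rw [h]
    push_cast
    ring

lemma keyIdentity (k L : ℕ) :
    ∑ m ∈ Finset.range (k + 1),
        (-1 : ℝ) ^ m * ((L + m).choose m : ℝ) * (surjCount k m : ℝ)
      = (-1 : ℝ) ^ k * (L + 1 : ℝ) ^ k := by
  set p : Polynomial ℝ := ∑ m ∈ Finset.range (k + 1),
      Polynomial.C ((surjCount k m : ℝ) / (m.factorial : ℝ)) * descPochhammer ℝ m with hpdef
  have hev : ∀ n : ℕ, p.eval (n : ℝ) = (n : ℝ) ^ k := by
    intro n
    rw [hpdef, Polynomial.eval_finset_sum]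
    have h1 : ∀ m ∈ Finset.range (k + 1),
        (Polynomial.C ((surjCount k m : ℝ) / (m.factorial : ℝ)) * descPochhammer ℝ m).eval (n : ℝ)
          = (surjCount k m : ℝ) * (n.choose m : ℝ) := by
      intro m _
      rw [Polynomial.eval_mul, Polynomial.eval_C, descPochhammer_eval_eq_descFactorial]
      have h2 : (n.descFactorial m : ℝ) = (m.factorial : ℝ) * (n.choose m : ℝ) := by
        rw [Nat.descFactorial_eq_factorial_mul_choose]; push_cast; ring
      rw [h2]
      have hm : (m.factorial : ℝ) ≠ 0 := Nat.cast_ne_zero.mpr m.factorial_ne_zero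
      field_simp
    rw [Finset.sum_congr rfl h1]
    have := identityA k n
    have : ((∑ m ∈ Finset.range (k + 1), surjCount k m * n.choose m : ℕ) : ℝ)
        = ((n ^ k : ℕ) : ℝ) := by rw [this]
    push_cast at this
    rw [this]
  have hp : p = Polynomial.X ^ k := by
    apply Polynomial.eq_of_infinite_eval_eq
    apply Set.Infinite.mono (h := ?_) (s := Set.range ((↑) : ℕ → ℝ))
    · exact Set.infinite_range_of_injective Nat.cast_injective
    · rintro _ ⟨n, rfl⟩
      simp only [Set.mem_setOf_eq, hev n, Polynomial.eval_pow, Polynomial.eval_X]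
  have hEval := congrArg (Polynomial.eval (-(L + 1 : ℝ))) hp
  rw [hpdef, Polynomial.eval_finset_sum] at hEval
  have h3 : ∀ m ∈ Finset.range (k + 1),
      (Polynomial.C ((surjCount k m : ℝ) / (m.factorial : ℝ)) * descPochhammer ℝ m).eval
          (-(L + 1 : ℝ))
        = (-1 : ℝ) ^ m * ((L + m).choose m : ℝ) * (surjCount k m : ℝ) := by
    intro m _
    rw [Polynomial.eval_mul, Polynomial.eval_C, descPoch_eval_neg L m]
    have h2 : ((L + m).descFactorial m : ℝ) = (m.factorial : ℝ) * ((L + m).choose m : ℝ) := by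
      rw [Nat.descFactorial_eq_factorial_mul_choose]; push_cast; ring
    rw [h2]
    have hm : (m.factorial : ℝ) ≠ 0 := Nat.cast_ne_zero.mpr m.factorial_ne_zero
    field_simp
  rw [Finset.sum_congr rfl h3] at hEval
  rw [hEval]
  rw [Polynomial.eval_pow, Polynomial.eval_X]
  rw [show (-(L + 1 : ℝ)) = (-1) * (L + 1 : ℝ) by ring, mul_pow]



lemma natAdd_inj (ℓ k : ℕ) : Function.Injective (Fin.natAdd ℓ : Fin k → Fin (ℓ + k)) := by
  intro a b h
  have h2 := congrArg Fin.val h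
  simp only [Fin.val_natAdd] at h2
  have h3 : ℓ + (a : ℕ) = ℓ + (b : ℕ) := by simpa using h2
  exact Fin.ext (by omega)

lemma natAdd_ne_castAdd (ℓ k : ℕ) (b : Fin k) (a : Fin ℓ) :
    Fin.natAdd ℓ b ≠ Fin.castAdd k a := by
  intro h
  have h2 : ℓ + (b : ℕ) = (a : ℕ) := by simpa using congrArg Fin.val h
  have := a.isLt
  omega

section Count

variable {ℓ k : ℕ} {c : ℝ} {x : Fin ℓ → ℝ} {ξ : Fin k → ℝ}

lemma pred_iff (hℓ : 1 ≤ ℓ) (hc : 0 < c)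
    (hx : ∀ i, x i < c)
    (hxx : ∀ i j, i ≠ j → c ≤ x i + x j)
    (hxξ : ∀ i j, c ≤ x i + ξ j)
    (hξ : ∑ j, ξ j < c) (j : ℕ) (π : Fin (ℓ + k) → Fin j) :
    (Function.Surjective π ∧
        ∀ i : Fin j, (∑ a ∈ Finset.univ.filter (fun a => π a = i), Fin.append x ξ a) < c)
      ↔ (Function.Surjective π ∧
        ∀ (a : Fin ℓ) (b : Fin (ℓ + k)), π b = π (Fin.castAdd k a) → b = Fin.castAdd k a) := by
  have hξpos : ∀ b, 0 < ξ b := by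
    intro b
    have h1 := hxξ ⟨0, hℓ⟩ b
    have h2 := hx ⟨0, hℓ⟩
    linarith
  constructor
  · rintro ⟨hs, hb⟩
    refine ⟨hs, fun a b hba => ?_⟩
    by_contra hne
    have hmema : Fin.castAdd k a ∈
        Finset.univ.filter (fun e => π e = π (Fin.castAdd k a)) := by simp
    have hmemb : b ∈
        (Finset.univ.filter (fun e => π e = π (Fin.castAdd k a))).erase (Fin.castAdd k a) :=
      Finset.mem_erase.mpr ⟨hne, by simp [hba]⟩
    have hval : ∀ e ∈ (Finset.univ.filter
          (fun e => π e = π (Fin.castAdd k a))).erase (Fin.castAdd k a),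
        c - x a ≤ Fin.append x ξ e := by
      intro e he
      obtain ⟨hne', _⟩ := Finset.mem_erase.mp he
      induction e using Fin.addCases with
      | left d =>
        have hd : d ≠ a := fun h => hne' (by rw [h])
        rw [Fin.append_left]
        have := hxx d a hd
        linarith
      | right d =>
        rw [Fin.append_right]
        have := hxξ a d
        linarith
    have hpos : ∀ e ∈ (Finset.univ.filter
          (fun e => π e = π (Fin.castAdd k a))).erase (Fin.castAdd k a),
        0 ≤ Fin.append x ξ e := by
      intro e he
      have h1 := hval e he
      have h2 := hx a
      linarith
    have h1 : c - x a ≤ ∑ e ∈ (Finset.univ.filter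
          (fun e => π e = π (Fin.castAdd k a))).erase (Fin.castAdd k a), Fin.append x ξ e :=
      le_trans (hval b hmemb) (Finset.single_le_sum hpos hmemb)
    have h2 : Fin.append x ξ (Fin.castAdd k a) + ∑ e ∈ (Finset.univ.filter
          (fun e => π e = π (Fin.castAdd k a))).erase (Fin.castAdd k a), Fin.append x ξ e
        = ∑ e ∈ Finset.univ.filter (fun e => π e = π (Fin.castAdd k a)), Fin.append x ξ e :=
      Finset.add_sum_erase _ _ hmema
    have h3 := hb (π (Fin.castAdd k a))
    rw [← h2, Fin.append_left] at h3
    linarith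
  · rintro ⟨hs, hq⟩
    refine ⟨hs, fun i => ?_⟩
    by_cases hex : ∃ a : Fin ℓ, π (Fin.castAdd k a) = i
    · obtain ⟨a, ha⟩ := hex
      have hset : Finset.univ.filter (fun e => π e = i) = {Fin.castAdd k a} := by
        ext e
        simp only [Finset.mem_filter, Finset.mem_univ, true_and, Finset.mem_singleton]
        constructor
        · intro he; exact hq a e (by rw [he, ha])
        · rintro rfl; exact ha
      rw [hset, Finset.sum_singleton, Fin.append_left]
      exact hx a
    · push_neg at hex
      have hFsub : Finset.univ.filter (fun e => π e = i)
          = (Finset.univ.filter (fun d : Fin k => π (Fin.natAdd ℓ d) = i)).map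
              ⟨Fin.natAdd ℓ, natAdd_inj ℓ k⟩ := by
        ext e
        simp only [Finset.mem_filter, Finset.mem_univ, true_and, Finset.mem_map,
          Function.Embedding.coeFn_mk]
        constructor
        · intro he
          induction e using Fin.addCases with
          | left d => exact absurd he (hex d)
          | right d => exact ⟨d, he, rfl⟩
        · rintro ⟨d, hd, rfl⟩; exact hd
      rw [hFsub, Finset.sum_map]
      simp only [Function.Embedding.coeFn_mk, Fin.append_right]
      calc ∑ d ∈ Finset.univ.filter (fun d : Fin k => π (Fin.natAdd ℓ d) = i), ξ d
          ≤ ∑ d, ξ d := Finset.sum_le_sum_of_subset_of_nonneg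
              (Finset.filter_subset _ _) (fun d _ _ => (hξpos d).le)
        _ < c := hξ

end Count

section Count2

variable {ℓ k j : ℕ}

/-- For injective `g`, the fiber of valid surjections over `g` is equivalent to surjections
onto the complement of the range of `g`. -/
noncomputable def fiberEquiv (g : Fin ℓ → Fin j) (hg : Function.Injective g) :
    {π : Fin (ℓ + k) → Fin j //
        (Function.Surjective π ∧
          ∀ (a : Fin ℓ) (b : Fin (ℓ + k)), π b = π (Fin.castAdd k a) → b = Fin.castAdd k a) ∧
        (fun a => π (Fin.castAdd k a)) = g} ≃
      {h : Fin k → {y : Fin j // ¬ ∃ a, g a = y} // Function.Surjective h} where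
  toFun π := by
    refine ⟨fun b => ⟨π.1 (Fin.natAdd ℓ b), ?_⟩, ?_⟩
    · rintro ⟨a, ha⟩
      have hga : g a = π.1 (Fin.castAdd k a) := (congrFun π.2.2 a).symm
      have := π.2.1.2 a (Fin.natAdd ℓ b) (by rw [← ha, hga])
      exact natAdd_ne_castAdd ℓ k b a this
    · rintro ⟨y, hy⟩
      obtain ⟨e, he⟩ := π.2.1.1 y
      induction e using Fin.addCases with
      | left a =>
        exact absurd ⟨a, (congrFun π.2.2 a).symm.trans he⟩ hy
      | right b => exact ⟨b, Subtype.ext he⟩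
  invFun h := by
    refine ⟨fun e => Fin.addCases g (fun b => (h.1 b).1) e, ⟨⟨?_, ?_⟩, ?_⟩⟩
    · intro y
      by_cases hy : ∃ a, g a = y
      · obtain ⟨a, ha⟩ := hy
        exact ⟨Fin.castAdd k a, by simp only [Fin.addCases_left]; exact ha⟩
      · obtain ⟨b, hb⟩ := h.2 ⟨y, hy⟩
        exact ⟨Fin.natAdd ℓ b, by simp only [Fin.addCases_right]; exact congrArg Subtype.val hb⟩
    · intro a b hba
      simp only [Fin.addCases_left] at hba
      induction b using Fin.addCases with
      | left b' =>
        simp only [Fin.addCases_left] at hba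
        exact congrArg (Fin.castAdd k) (hg hba)
      | right b' =>
        simp only [Fin.addCases_right] at hba
        exact absurd ⟨a, hba.symm⟩ (h.1 b').2
    · funext a
      exact Fin.addCases_left a
  left_inv := by
    intro π
    apply Subtype.ext
    funext e
    induction e using Fin.addCases with
    | left a =>
      simp only [Fin.addCases_left]
      exact (congrFun π.2.2 a).symm
    | right b =>
      simp only [Fin.addCases_right]
  right_inv := by
    intro h
    apply Subtype.ext
    funext b
    apply Subtype.ext
    simp only [Fin.addCases_right]

end Count2

lemma countQ (ℓ k j : ℕ) :
    Nat.card {π : Fin (ℓ + k) → Fin j // Function.Surjective π ∧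
        ∀ (a : Fin ℓ) (b : Fin (ℓ + k)), π b = π (Fin.castAdd k a) → b = Fin.castAdd k a}
      = j.descFactorial ℓ * surjCount k (j - ℓ) := by
  rw [Nat.card_eq_fintype_card, Fintype.card_subtype]
  rw [Finset.card_eq_sum_card_fiberwise
      (f := fun π : Fin (ℓ + k) → Fin j => (fun a => π (Fin.castAdd k a)))
      (t := (Finset.univ : Finset (Fin ℓ → Fin j))) (fun π _ => Finset.mem_univ _)]
  have hfib : ∀ g : Fin ℓ → Fin j, Function.Injective g →
      (Finset.filter (fun π : Fin (ℓ + k) → Fin j => (fun a => π (Fin.castAdd k a)) = g)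
        (Finset.univ.filter (fun π : Fin (ℓ + k) → Fin j => Function.Surjective π ∧
          ∀ (a : Fin ℓ) (b : Fin (ℓ + k)),
            π b = π (Fin.castAdd k a) → b = Fin.castAdd k a))).card
        = surjCount k (j - ℓ) := by
    intro g hg
    rw [Finset.filter_filter, ← Fintype.card_subtype, ← Nat.card_eq_fintype_card]
    rw [Nat.card_congr (fiberEquiv g hg), surjCount_congr, Fintype.card_fin]
    congr 1
    have h1 : Fintype.card {y : Fin j // ∃ a, g a = y} = ℓ := by
      rw [Fintype.card_congr (Equiv.subtypeEquivRight
        (p := fun y => ∃ a, g a = y)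
        (q := fun y => y ∈ Set.range g) (fun y => Iff.rfl))]
      rw [Set.card_range_of_injective hg, Fintype.card_fin]
    rw [Fintype.card_subtype_compl, h1, Fintype.card_fin]
  have hfib0 : ∀ g : Fin ℓ → Fin j, ¬ Function.Injective g →
      (Finset.filter (fun π : Fin (ℓ + k) → Fin j => (fun a => π (Fin.castAdd k a)) = g)
        (Finset.univ.filter (fun π : Fin (ℓ + k) → Fin j => Function.Surjective π ∧
          ∀ (a : Fin ℓ) (b : Fin (ℓ + k)),
            π b = π (Fin.castAdd k a) → b = Fin.castAdd k a))).card = 0 := by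
    intro g hg
    rw [Finset.card_eq_zero, Finset.eq_empty_iff_forall_notMem]
    intro π hπ
    rw [Finset.mem_filter, Finset.mem_filter] at hπ
    obtain ⟨⟨-, -, halone⟩, hcompat⟩ := hπ
    apply hg
    intro a a' haa'
    have h1 : π (Fin.castAdd k a) = g a := congrFun hcompat a
    have h2 : π (Fin.castAdd k a') = g a' := congrFun hcompat a'
    have h3 := halone a (Fin.castAdd k a') (by rw [h2, h1, haa'])
    exact ((Fin.castAdd_injective ℓ k) h3).symm
  rw [← Finset.sum_filter_add_sum_filter_not Finset.univ
      (fun g : Fin ℓ → Fin j => Function.Injective g)]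
  have hz : ∑ g ∈ Finset.univ.filter (fun g : Fin ℓ → Fin j => ¬ Function.Injective g),
      (Finset.filter (fun π : Fin (ℓ + k) → Fin j => (fun a => π (Fin.castAdd k a)) = g)
        (Finset.univ.filter (fun π : Fin (ℓ + k) → Fin j => Function.Surjective π ∧
          ∀ (a : Fin ℓ) (b : Fin (ℓ + k)),
            π b = π (Fin.castAdd k a) → b = Fin.castAdd k a))).card = 0 :=
    Finset.sum_eq_zero (fun g hgm => hfib0 g (Finset.mem_filter.mp hgm).2)
  rw [Finset.sum_congr rfl (fun g hgm => hfib g (Finset.mem_filter.mp hgm).2),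
    Finset.sum_const, hz, add_zero, smul_eq_mul]
  congr 1
  rw [← Fintype.card_subtype,
    Fintype.card_congr (Equiv.subtypeInjectiveEquivEmbedding (Fin ℓ) (Fin j)),
    Fintype.card_embedding_eq, Fintype.card_fin, Fintype.card_fin]


/-- If `ℓ ≥ 1`, `k ≥ 0`, `c > 0` and `x₁,…,x_ℓ, ξ₁,…,ξ_k` satisfy
`x i < c`, `x i + x j ≥ c` for `i ≠ j`, `x i + ξ j ≥ c` for all `i,j`, and
`ξ₁ + ⋯ + ξ_k < c`, then `𝔏_c(x₁,…,x_ℓ,ξ₁,…,ξ_k) = (-1)^(ℓ+k+1) (ℓ-1)! ℓ^k`. -/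
theorem linnik_special_eval (ℓ k : ℕ) (hℓ : 1 ≤ ℓ) (c : ℝ) (hc : 0 < c)
    (x : Fin ℓ → ℝ) (ξ : Fin k → ℝ)
    (hx : ∀ i, x i < c)
    (hxx : ∀ i j, i ≠ j → c ≤ x i + x j)
    (hxξ : ∀ i j, c ≤ x i + ξ j)
    (hξ : ∑ j, ξ j < c) :
    LinnikOn c (Fin.append x ξ) =
      (-1 : ℝ) ^ (ℓ + k + 1) * ((ℓ - 1).factorial : ℝ) * (ℓ : ℝ) ^ k := by
  obtain ⟨L, rfl⟩ : ∃ L, ℓ = L + 1 := ⟨ℓ - 1, by omega⟩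
  simp only [LinnikOn, Fintype.card_fin]
  have hterm : ∀ j : ℕ,
      (Nat.card {π : Fin (L + 1 + k) → Fin j // Function.Surjective π ∧
          ∀ i : Fin j, (∑ a ∈ Finset.univ.filter (fun a => π a = i), Fin.append x ξ a) < c} : ℕ)
        = j.descFactorial (L + 1) * surjCount k (j - (L + 1)) := by
    intro j
    rw [Nat.card_congr (Equiv.subtypeEquivRight (pred_iff hℓ hc hx hxx hxξ hξ j))]
    exact countQ (L + 1) k j
  simp only [hterm]
  -- restrict the summation range to j ≥ L + 1
  rw [← Finset.sum_subset (Finset.Icc_subset_Icc (by omega : 1 ≤ L + 1) le_rfl) ?_]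
  swap
  · intro j hj hj2
    have : j < L + 1 := by
      simp only [Finset.mem_Icc] at hj hj2
      omega
    rw [Nat.descFactorial_eq_zero_iff_lt.mpr this]
    simp
  -- reindex j = L + 1 + m
  have hreidx : (Finset.Icc (L + 1) (L + 1 + k))
      = (Finset.range (k + 1)).map (addLeftEmbedding (L + 1)) := by
    rw [show Finset.range (k + 1) = Finset.Icc 0 k by
      rw [← Finset.Ico_add_one_right_eq_Icc, Finset.range_eq_Ico]]
    rw [Finset.map_add_left_Icc, add_zero]
  rw [hreidx, Finset.sum_map]
  simp only [addLeftEmbedding_apply]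
  have hstep : ∀ m ∈ Finset.range (k + 1),
      (-1 : ℝ) ^ (L + 1 + m + 1) / ((L + 1 + m : ℕ) : ℝ) *
          (((L + 1 + m).descFactorial (L + 1) * surjCount k (L + 1 + m - (L + 1)) : ℕ) : ℝ)
        = ((-1 : ℝ) ^ L * (L.factorial : ℝ)) *
            ((-1 : ℝ) ^ m * (((L + m).choose m : ℕ) : ℝ) * ((surjCount k m : ℕ) : ℝ)) := by
    intro m _
    have e1 : L + 1 + m - (L + 1) = m := by omega
    have e2 : (L + 1 + m).descFactorial (L + 1) = (L + 1 + m) * ((L + m).descFactorial L) := by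
      rw [show L + 1 + m = (L + m) + 1 by omega]
      exact Nat.succ_descFactorial_succ (L + m) L
    have e3 : (L + m).descFactorial L = L.factorial * ((L + m).choose m) := by
      rw [Nat.descFactorial_eq_factorial_mul_choose, Nat.choose_symm_add]
    have e4 : (-1 : ℝ) ^ (L + 1 + m + 1) = (-1) ^ L * (-1) ^ m := by
      rw [show L + 1 + m + 1 = L + m + 2 by omega, pow_add, pow_add]
      norm_num
    have e5 : ((L + 1 + m : ℕ) : ℝ) ≠ 0 := by positivity
    rw [e1, e2, e3, e4]
    push_cast
    field_simp
  rw [Finset.sum_congr rfl hstep, ← Finset.mul_sum, keyIdentity k L]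
  have e6 : (-1 : ℝ) ^ (L + 1 + k + 1) = (-1) ^ L * (-1) ^ k := by
    rw [show L + 1 + k + 1 = L + k + 2 by omega, pow_add, pow_add]
    norm_num
  rw [e6, show L + 1 - 1 = L by omega]
  push_cast
  ring
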